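/- Let K : ℓ²(Λ) → H with ‖K‖ < 1 and β ≥ 1, and fix x ∈ B_R. The functional F_β(w; x) = ‖Kw - y‖² - ‖K(w - x)‖² + (1/β)‖w - x‖² is strictly convex in w, and its unique minimizer over B_R is P_R(x + β K*(y - Kx)). -/

import Mathlib

open scoped ENNReal NNReal

/-- The `ℓ¹`-ball of radius `R` inside `ℓ²(I)`. -/
noncomputable def l1Ball (I : Type*) (R : ℝ) : Set (lp (fun _ : I => ℝ) 2) :=
  {x | (∑' i, (‖x i‖₊ : ℝ≥0∞)) ≤ ENNReal.ofReal R}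

lemma l1Ball_convex (I : Type*) (R : ℝ) : Convex ℝ (l1Ball I R) := by
  intro p hp q hq a b ha hb hab
  simp only [l1Ball, Set.mem_setOf_eq] at *
  have key : ∀ i, (‖(a • p + b • q) i‖₊ : ℝ≥0∞) ≤ ‖a‖₊ * ‖p i‖₊ + ‖b‖₊ * ‖q i‖₊ := by
    intro i
    have h1 : (a • p + b • q) i = a * p i + b * q i := by
      simp [lp.coeFn_add, lp.coeFn_smul, Pi.add_apply, Pi.smul_apply, smul_eq_mul]; rfl
    rw [h1]
    calc (‖a * p i + b * q i‖₊ : ℝ≥0∞) ≤ (‖a * p i‖₊ : ℝ≥0∞) + ‖b * q i‖₊ := by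
          exact_mod_cast nnnorm_add_le _ _
      _ = ‖a‖₊ * ‖p i‖₊ + ‖b‖₊ * ‖q i‖₊ := by
          rw [nnnorm_mul, nnnorm_mul]; push_cast; ring
  have hca : (‖a‖₊ : ℝ≥0∞) = ENNReal.ofReal a := by
    rw [← enorm_eq_nnnorm, Real.enorm_eq_ofReal ha]
  have hcb : (‖b‖₊ : ℝ≥0∞) = ENNReal.ofReal b := by
    rw [← enorm_eq_nnnorm, Real.enorm_eq_ofReal hb]
  calc (∑' i, (‖(a • p + b • q) i‖₊ : ℝ≥0∞))
      ≤ ∑' i, ((‖a‖₊ : ℝ≥0∞) * ‖p i‖₊ + (‖b‖₊ : ℝ≥0∞) * ‖q i‖₊) :=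
        ENNReal.tsum_le_tsum key
    _ = (‖a‖₊ : ℝ≥0∞) * (∑' i, (‖p i‖₊ : ℝ≥0∞)) + (‖b‖₊ : ℝ≥0∞) * ∑' i, (‖q i‖₊ : ℝ≥0∞) := by
        rw [ENNReal.tsum_add, ENNReal.tsum_mul_left, ENNReal.tsum_mul_left]
    _ ≤ ENNReal.ofReal a * ENNReal.ofReal R + ENNReal.ofReal b * ENNReal.ofReal R := by
        rw [hca, hcb]; exact add_le_add (mul_le_mul_right hp _) (mul_le_mul_right hq _)
    _ = ENNReal.ofReal R := by
        rw [← add_mul, ← ENNReal.ofReal_add ha hb, hab, ENNReal.ofReal_one, one_mul]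

lemma l1Ball_closed (I : Type*) (R : ℝ) : IsClosed (l1Ball I R) := by
  have hc : ∀ i : I, Continuous fun x : lp (fun _ : I => ℝ) 2 => (‖x i‖₊ : ℝ≥0∞) := by
    intro i
    have hLip : LipschitzWith 1 fun x : lp (fun _ : I => ℝ) 2 => x i := by
      apply LipschitzWith.of_dist_le_mul
      intro f g
      simp only [NNReal.coe_one, one_mul, dist_eq_norm]
      have h : f i - g i = (f - g) i := by simp [lp.coeFn_sub]
      rw [h]
      exact lp.norm_apply_le_norm (by norm_num) (f - g) i
    exact ENNReal.continuous_coe.comp (hLip.continuous.nnnorm)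
  have hlsc : LowerSemicontinuous fun x : lp (fun _ : I => ℝ) 2 =>
      ∑' i, (‖x i‖₊ : ℝ≥0∞) :=
    lowerSemicontinuous_tsum fun i => (hc i).lowerSemicontinuous
  exact hlsc.isClosed_preimage (ENNReal.ofReal R)

lemma combo_id {E : Type*} [NormedAddCommGroup E] [InnerProductSpace ℝ E] (a b : E)
    {t s : ℝ} (h : t + s = 1) :
    t * ‖a‖ ^ 2 + s * ‖b‖ ^ 2 - ‖t • a + s • b‖ ^ 2 = t * s * ‖a - b‖ ^ 2 := by
  have h1 : ‖t • a + s • b‖ ^ 2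
      = t ^ 2 * ‖a‖ ^ 2 + 2 * (t * s) * (inner ℝ a b : ℝ) + s ^ 2 * ‖b‖ ^ 2 := by
    rw [norm_add_sq_real]
    simp only [norm_smul, Real.norm_eq_abs, inner_smul_left, inner_smul_right,
      RCLike.conj_to_real, mul_pow, sq_abs]
    ring
  have h2 : ‖a - b‖ ^ 2 = ‖a‖ ^ 2 - 2 * (inner ℝ a b : ℝ) + ‖b‖ ^ 2 := norm_sub_sq_real a b
  have hs : s = 1 - t := by linarith
  subst hs
  rw [h1, h2]; ring

/-- The quadratic identity `F_β(w;x) = (1/β)‖w - u‖² + C`. -/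
lemma quad_identity {E : Type*} {H : Type*} [NormedAddCommGroup E] [InnerProductSpace ℝ E]
    [NormedAddCommGroup H] [InnerProductSpace ℝ H] [CompleteSpace E] [CompleteSpace H]
    (K : E →L[ℝ] H) (y : H) (x : E) {β : ℝ} (hβ : β ≠ 0) (w : E) :
    ‖K w - y‖ ^ 2 - ‖K (w - x)‖ ^ 2 + (1 / β) * ‖w - x‖ ^ 2
      = (1 / β) * ‖w - (x + β • (ContinuousLinearMap.adjoint K) (y - K x))‖ ^ 2
        + (‖K x - y‖ ^ 2 - β * ‖(ContinuousLinearMap.adjoint K) (y - K x)‖ ^ 2) := by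
  set z : E := (ContinuousLinearMap.adjoint K) (y - K x) with hz
  have ipz : (inner ℝ (w - x) z : ℝ) = inner ℝ (K (w - x)) (y - K x) :=
    ContinuousLinearMap.adjoint_inner_right K (w - x) (y - K x)
  have e1 : ‖K w - y‖ ^ 2
      = ‖K (w - x)‖ ^ 2 - 2 * (inner ℝ (w - x) z : ℝ) + ‖K x - y‖ ^ 2 := by
    have hsplit : K w - y = K (w - x) + (K x - y) := by rw [map_sub]; abel
    rw [hsplit, norm_add_sq_real, ipz]
    have hneg : (inner ℝ (K (w - x)) (K x - y) : ℝ) = -(inner ℝ (K (w - x)) (y - K x) : ℝ) := by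
      rw [← inner_neg_right]; congr 1; abel
    rw [hneg]; ring
  have e2 : ‖w - (x + β • z)‖ ^ 2
      = ‖w - x‖ ^ 2 - 2 * β * (inner ℝ (w - x) z : ℝ) + β ^ 2 * ‖z‖ ^ 2 := by
    have hsplit : w - (x + β • z) = (w - x) - β • z := by abel
    rw [hsplit, norm_sub_sq_real, inner_smul_right, norm_smul, Real.norm_eq_abs,
      mul_pow, sq_abs]
    ring
  rw [e1, e2]
  field_simp
  ring

/-- Abstract result: minimizing `c‖w-u‖² + C` over a nonempty closed convex set. -/
lemma quad_min {E : Type*} [NormedAddCommGroup E] [InnerProductSpace ℝ E] [CompleteSpace E]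
    {S : Set E} (hS : Convex ℝ S) (hcl : IsClosed S) (hne : S.Nonempty)
    {c : ℝ} (hc : 0 < c) (u : E) (C : ℝ) {G : E → ℝ}
    (hid : ∀ w, G w = c * ‖w - u‖ ^ 2 + C) :
    StrictConvexOn ℝ Set.univ G ∧
    (∃! w, w ∈ S ∧ ∀ v ∈ S, G w ≤ G v) ∧
    (∀ w, (w ∈ S ∧ ∀ v ∈ S, G w ≤ G v) → ∀ v ∈ S, ‖w - u‖ ≤ ‖v - u‖) := by
  have hsc : StrictConvexOn ℝ Set.univ G := by
    refine ⟨convex_univ, ?_⟩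
    intro a _ b _ hab t s ht hs hts
    have hcombo : t • a + s • b - u = t • (a - u) + s • (b - u) := by
      have h1 : t • u + s • u = u := by rw [← add_smul, hts, one_smul]
      have h2 : t • (a - u) + s • (b - u) = t • a + s • b - (t • u + s • u) := by
        rw [smul_sub, smul_sub]; abel
      rw [h2, h1]
    have hkey := combo_id (a - u) (b - u) hts
    have hab' : (a - u) - (b - u) = a - b := by abel
    rw [hab'] at hkey
    have hpos : 0 < t * s * ‖a - b‖ ^ 2 := by
      have h2 : 0 < ‖a - b‖ := by
        rw [norm_pos_iff]; intro h; exact hab (by rwa [sub_eq_zero] at h)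
      positivity
    rw [hid, hid, hid, hcombo]
    simp only [smul_eq_mul]
    have hC : t * C + s * C = C := by rw [← add_mul, hts, one_mul]
    have h3 : c * (t * ‖a - u‖ ^ 2 + s * ‖b - u‖ ^ 2 - ‖t • (a - u) + s • (b - u)‖ ^ 2)
        = c * (t * s * ‖a - b‖ ^ 2) := by rw [hkey]
    nlinarith [hC, h3, mul_pos hc hpos]
  refine ⟨hsc, ?_, ?_⟩
  · obtain ⟨v, hv, hvmin⟩ :=
      exists_norm_eq_iInf_of_complete_convex hne hcl.isComplete hS u
    have hvle : ∀ w ∈ S, ‖u - v‖ ≤ ‖u - w‖ := by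
      intro w hw
      rw [hvmin]
      exact ciInf_le ⟨0, fun r ⟨w', hw'⟩ => hw' ▸ norm_nonneg _⟩ (⟨w, hw⟩ : S)
    have hminG : ∀ w ∈ S, G v ≤ G w := by
      intro w hw
      rw [hid, hid]
      have h1 : ‖v - u‖ ≤ ‖w - u‖ := by
        rw [norm_sub_rev v u, norm_sub_rev w u]; exact hvle w hw
      have h2 : ‖v - u‖ ^ 2 ≤ ‖w - u‖ ^ 2 := pow_le_pow_left₀ (norm_nonneg _) h1 2
      nlinarith
    refine ⟨v, ⟨hv, hminG⟩, ?_⟩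
    rintro w ⟨hw, hwmin⟩
    by_contra hne'
    have hm : (1/2 : ℝ) • w + (1/2 : ℝ) • v ∈ S :=
      hS hw hv (by norm_num) (by norm_num) (by norm_num)
    have hstrict := hsc.2 (Set.mem_univ w) (Set.mem_univ v) hne'
      (by norm_num : (0:ℝ) < 1/2) (by norm_num : (0:ℝ) < 1/2) (by norm_num)
    simp only [smul_eq_mul] at hstrict
    have h1 := hwmin _ hm
    have h2 := hminG w hw
    have h3 := hwmin v hv
    linarith
  · rintro w ⟨hw, hwmin⟩ v hv
    have hle := hwmin v hv
    rw [hid w, hid v] at hle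
    have hsq : ‖w - u‖ ^ 2 ≤ ‖v - u‖ ^ 2 := by nlinarith
    nlinarith [norm_nonneg (w - u), norm_nonneg (v - u)]

theorem stmt14 {I : Type*} [Countable I] {H : Type*} [NormedAddCommGroup H]
    [InnerProductSpace ℝ H] [CompleteSpace H]
    (K : lp (fun _ : I => ℝ) 2 →L[ℝ] H) (hK : ‖K‖ < 1) (y : H) (R : ℝ) (hR : 0 < R)
    (β : ℝ) (hβ : 1 ≤ β) (x : lp (fun _ : I => ℝ) 2) (hx : x ∈ l1Ball I R) :
    StrictConvexOn ℝ Set.univ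
      (fun w : lp (fun _ : I => ℝ) 2 =>
        ‖K w - y‖ ^ 2 - ‖K (w - x)‖ ^ 2 + (1 / β) * ‖w - x‖ ^ 2) ∧
    (∃! w : lp (fun _ : I => ℝ) 2, w ∈ l1Ball I R ∧
      ∀ v ∈ l1Ball I R,
        ‖K w - y‖ ^ 2 - ‖K (w - x)‖ ^ 2 + (1 / β) * ‖w - x‖ ^ 2 ≤
          ‖K v - y‖ ^ 2 - ‖K (v - x)‖ ^ 2 + (1 / β) * ‖v - x‖ ^ 2) ∧
    (∀ w : lp (fun _ : I => ℝ) 2,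
      (w ∈ l1Ball I R ∧
        ∀ v ∈ l1Ball I R,
          ‖K w - y‖ ^ 2 - ‖K (w - x)‖ ^ 2 + (1 / β) * ‖w - x‖ ^ 2 ≤
            ‖K v - y‖ ^ 2 - ‖K (v - x)‖ ^ 2 + (1 / β) * ‖v - x‖ ^ 2) →
      ∀ v ∈ l1Ball I R,
        ‖w - (x + β • (ContinuousLinearMap.adjoint K) (y - K x))‖ ≤
          ‖v - (x + β • (ContinuousLinearMap.adjoint K) (y - K x))‖) := by
  have hβ0 : (0 : ℝ) < β := lt_of_lt_of_le one_pos hβ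
  have h1β : (0 : ℝ) < 1 / β := by positivity
  have hne : (l1Ball I R).Nonempty := ⟨x, hx⟩
  exact quad_min (l1Ball_convex I R) (l1Ball_closed I R) hne h1β
    (x + β • (ContinuousLinearMap.adjoint K) (y - K x))
    (‖K x - y‖ ^ 2 - β * ‖(ContinuousLinearMap.adjoint K) (y - K x)‖ ^ 2)
    (fun w => quad_identity K y x (ne_of_gt hβ0) w)
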